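/- Let n ≥ 1 and let S ∈ ℂ^{n×n} be upper triangular. Then there exist a unitary matrix U ∈ ℂ^{n×n} and a permutation σ of {1,…,n} such that T = UᴴSU is upper triangular with T_{ii} = S_{σ(i)σ(i)} for all i, block equivalence is preserved (i and j are block equivalent with respect to T if and only if σ(i) and σ(j) are block equivalent with respect to S), each block-equivalence class of T is an interval of indices (if i ≤ j ≤ k and i is block equivalent to k with respect to T, then i is block equivalent to j with respect to T), and T_{ij} = 0 whenever i and j are not block equivalent with respect to T; that is, T is block diagonal with upper triangular diagonal blocks whose index sets are exactly the block-equivalence classes. -/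

import Mathlib

open Matrix

/-- Indices `i` and `j` are directly related for a matrix `T` if `i ≠ j` and
`T i j ≠ 0` or `T j i ≠ 0`. -/
def DirectlyRelated {n : ℕ} (T : Matrix (Fin n) (Fin n) ℂ) (i j : Fin n) : Prop :=
  i ≠ j ∧ (T i j ≠ 0 ∨ T j i ≠ 0)

/-- Block equivalence of indices: the equivalence relation generated by direct
relation. -/
def BlockEquiv {n : ℕ} (T : Matrix (Fin n) (Fin n) ℂ) (i j : Fin n) : Prop :=
  Relation.EqvGen (DirectlyRelated T) i j

lemma blockEquiv_refl {n : ℕ} (T : Matrix (Fin n) (Fin n) ℂ) (a : Fin n) :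
    BlockEquiv T a a := Relation.EqvGen.refl a

lemma blockEquiv_symm {n : ℕ} {T : Matrix (Fin n) (Fin n) ℂ} {a b : Fin n}
    (h : BlockEquiv T a b) : BlockEquiv T b a := Relation.EqvGen.symm a b h

lemma blockEquiv_trans {n : ℕ} {T : Matrix (Fin n) (Fin n) ℂ} {a b c : Fin n}
    (h : BlockEquiv T a b) (h' : BlockEquiv T b c) : BlockEquiv T a c :=
  Relation.EqvGen.trans a b c h h'

lemma not_blockEquiv_zero {n : ℕ} {T : Matrix (Fin n) (Fin n) ℂ} {a b : Fin n}
    (h : ¬ BlockEquiv T a b) : T a b = 0 := by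
  by_contra hz
  have hab : a ≠ b := by rintro rfl; exact h (blockEquiv_refl T a)
  exact h (Relation.EqvGen.rel a b ⟨hab, Or.inl hz⟩)

open Classical in
/-- The representative (smallest member) of the block-equivalence class of `a`. -/
noncomputable def blockRep {n : ℕ} (S : Matrix (Fin n) (Fin n) ℂ) (a : Fin n) : Fin n :=
  (Finset.univ.filter (fun j => BlockEquiv S a j)).min'
    ⟨a, by simpa using blockEquiv_refl S a⟩

open Classical in
lemma blockEquiv_blockRep {n : ℕ} (S : Matrix (Fin n) (Fin n) ℂ) (a : Fin n) :
    BlockEquiv S a (blockRep S a) := by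
  have := (Finset.univ.filter (fun j => BlockEquiv S a j)).min'_mem
    ⟨a, by simpa using blockEquiv_refl S a⟩
  exact (Finset.mem_filter.mp this).2

open Classical in
lemma blockRep_eq_of_blockEquiv {n : ℕ} {S : Matrix (Fin n) (Fin n) ℂ} {a b : Fin n}
    (h : BlockEquiv S a b) : blockRep S a = blockRep S b := by
  have hset : (Finset.univ.filter (fun j => BlockEquiv S a j)) =
      (Finset.univ.filter (fun j => BlockEquiv S b j)) := by
    ext j
    simp only [Finset.mem_filter, Finset.mem_univ, true_and]
    exact ⟨fun hj => blockEquiv_trans (blockEquiv_symm h) hj,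
           fun hj => blockEquiv_trans h hj⟩
  unfold blockRep
  congr 1

lemma blockEquiv_of_blockRep_eq {n : ℕ} {S : Matrix (Fin n) (Fin n) ℂ} {a b : Fin n}
    (h : blockRep S a = blockRep S b) : BlockEquiv S a b := by
  have h1 := blockEquiv_blockRep S a
  have h2 := blockEquiv_blockRep S b
  rw [h] at h1
  exact blockEquiv_trans h1 (blockEquiv_symm h2)

lemma eqvGen_comap {α β : Type*} {r : β → β → Prop} {r' : α → α → Prop} (e : α ≃ β)
    (hrr : ∀ a b, r' a b ↔ r (e a) (e b)) (i j : α) :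
    Relation.EqvGen r' i j ↔ Relation.EqvGen r (e i) (e j) := by
  constructor
  · intro h
    induction h with
    | rel a b hab => exact Relation.EqvGen.rel _ _ ((hrr a b).1 hab)
    | refl a => exact Relation.EqvGen.refl _
    | symm a b _ ih => exact Relation.EqvGen.symm _ _ ih
    | trans a b c _ _ ih1 ih2 => exact Relation.EqvGen.trans _ _ _ ih1 ih2
  · intro h
    have key : ∀ x y : β, Relation.EqvGen r x y →
        Relation.EqvGen r' (e.symm x) (e.symm y) := by
      intro x y h
      induction h with
      | rel a b hab =>
          exact Relation.EqvGen.rel _ _ ((hrr _ _).2 (by simpa using hab))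
      | refl a => exact Relation.EqvGen.refl _
      | symm a b _ ih => exact Relation.EqvGen.symm _ _ ih
      | trans a b c _ _ ih1 ih2 => exact Relation.EqvGen.trans _ _ _ ih1 ih2
    simpa using key _ _ h

/-- Lexicographic comparison via the key `n * r + x`. -/
lemma lex_fst_le {n r1 r2 x y : ℕ} (hy : y < n) (h : n * r1 + x ≤ n * r2 + y) :
    r1 ≤ r2 := by
  by_contra hcon
  push_neg at hcon
  have h2 : n * (r2 + 1) ≤ n * r1 := Nat.mul_le_mul_left n hcon
  rw [Nat.mul_succ] at h2
  linarith

theorem exists_unitary_block_diagonalisation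
    {n : ℕ} (hn : 1 ≤ n) (S : Matrix (Fin n) (Fin n) ℂ)
    (hS : ∀ i j : Fin n, j < i → S i j = 0) :
    ∃ (U : Matrix (Fin n) (Fin n) ℂ) (σ : Equiv.Perm (Fin n)),
      Uᴴ * U = 1 ∧
      (∀ i j : Fin n, j < i → (Uᴴ * S * U) i j = 0) ∧
      (∀ i : Fin n, (Uᴴ * S * U) i i = S (σ i) (σ i)) ∧
      (∀ i j : Fin n, BlockEquiv (Uᴴ * S * U) i j ↔ BlockEquiv S (σ i) (σ j)) ∧
      (∀ i j k : Fin n, i ≤ j → j ≤ k →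
        BlockEquiv (Uᴴ * S * U) i k → BlockEquiv (Uᴴ * S * U) i j) ∧
      (∀ i j : Fin n, ¬ BlockEquiv (Uᴴ * S * U) i j → (Uᴴ * S * U) i j = 0) := by
  classical
  -- the sorting key: class representative first, then the index itself
  set key : Fin n → ℕ := fun a => n * (blockRep S a : ℕ) + (a : ℕ) with hkey
  have key_inj : Function.Injective key := by
    intro a b hab
    simp only [hkey] at hab
    have h1 : (blockRep S a : ℕ) ≤ (blockRep S b : ℕ) := lex_fst_le b.isLt hab.le
    have h2 : (blockRep S b : ℕ) ≤ (blockRep S a : ℕ) := lex_fst_le a.isLt hab.ge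
    have hr : (blockRep S a : ℕ) = (blockRep S b : ℕ) := le_antisymm h1 h2
    rw [hr] at hab
    exact Fin.ext (Nat.add_left_cancel hab)
  set σ : Equiv.Perm (Fin n) := Tuple.sort key with hσ
  have hmono : Monotone (key ∘ σ) := Tuple.monotone_sort key
  have hsmono : StrictMono (key ∘ σ) :=
    hmono.strictMono_of_injective (key_inj.comp σ.injective)
  -- the permutation matrix
  set U : Matrix (Fin n) (Fin n) ℂ := fun a b => if a = σ b then 1 else 0 with hU
  have hUcol : ∀ (M : Matrix (Fin n) (Fin n) ℂ) i j, (M * U) i j = M i (σ j) := by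
    intro M i j
    simp only [Matrix.mul_apply, hU, mul_ite, mul_one, mul_zero]
    show ∑ b, M i b * (if b = σ j then 1 else 0) = M i (σ j)
    simp
  have hUrow : ∀ (M : Matrix (Fin n) (Fin n) ℂ) i j, (Uᴴ * M) i j = M (σ i) j := by
    intro M i j
    simp only [Matrix.mul_apply, Matrix.conjTranspose_apply, hU,
      apply_ite (star : ℂ → ℂ), star_one, star_zero, ite_mul, one_mul, zero_mul]
    show ∑ a, star (if a = σ i then (1 : ℂ) else 0) * M a j = M (σ i) j
    simp [apply_ite (star : ℂ → ℂ)]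
  have hUU : Uᴴ * U = 1 := by
    ext i j
    rw [hUrow]
    simp only [hU, Matrix.one_apply, EmbeddingLike.apply_eq_iff_eq]
  have hT : ∀ i j, (Uᴴ * S * U) i j = S (σ i) (σ j) := fun i j => by
    rw [hUcol, hUrow]
  -- direct relation transported
  have hDR : ∀ i j, DirectlyRelated (Uᴴ * S * U) i j ↔ DirectlyRelated S (σ i) (σ j) := by
    intro i j
    unfold DirectlyRelated
    rw [hT, hT]
    simp [EmbeddingLike.apply_eq_iff_eq]
  have hBE : ∀ i j, BlockEquiv (Uᴴ * S * U) i j ↔ BlockEquiv S (σ i) (σ j) := by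
    intro i j
    exact eqvGen_comap (σ : Fin n ≃ Fin n) hDR i j
  refine ⟨U, σ, hUU, ?_, fun i => hT i i, hBE, ?_, ?_⟩
  · -- upper triangular
    intro i j hji
    rw [hT]
    by_cases h : BlockEquiv S (σ i) (σ j)
    · have hrep : blockRep S (σ j) = blockRep S (σ i) :=
        blockRep_eq_of_blockEquiv (blockEquiv_symm h)
      have hlt := hsmono hji
      simp only [Function.comp, hkey, hrep] at hlt
      have : ((σ j : Fin n) : ℕ) < ((σ i : Fin n) : ℕ) := by
        exact Nat.lt_of_add_lt_add_left hlt
      exact hS _ _ (Fin.lt_def.mpr this)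
    · exact not_blockEquiv_zero h
  · -- classes are intervals
    intro i j k hij hjk hik
    rw [hBE] at hik ⊢
    have hrep : blockRep S (σ k) = blockRep S (σ i) :=
      blockRep_eq_of_blockEquiv (blockEquiv_symm hik)
    have h1 := hmono hij
    have h2 := hmono hjk
    simp only [Function.comp, hkey, hrep] at h1 h2
    have ha : (blockRep S (σ i) : ℕ) ≤ (blockRep S (σ j) : ℕ) := lex_fst_le (σ j).isLt h1
    have hb : (blockRep S (σ j) : ℕ) ≤ (blockRep S (σ i) : ℕ) := lex_fst_le (σ k).isLt h2
    exact blockEquiv_of_blockRep_eq (Fin.ext (le_antisymm ha hb))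
  · -- vanishing off blocks
    intro i j hij
    rw [hT]
    rw [hBE] at hij
    exact not_blockEquiv_zero hij
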